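/- Let X and Y be C^1 vector fields on an open set U ⊆ ℝ^n with [X, Y] = 0, let z ∈ U with X(z) = 0, and let γ : I → U be a C^1 curve defined on an interval I containing 0 with γ(0) = z and γ'(t) = Y(γ(t)) for all t ∈ I. Then X(γ(t)) = 0 for all t ∈ I. In particular, if Y(z) ≠ 0, then z is not an isolated zero of X: every isolated zero of X_1 in a family of pairwise commuting vector fields X_1, ..., X_p is a common zero of all of them. -/

import Mathlib

open Set

lemma key_zero_along_flow
    (n : ℕ) (U : Set (Fin n → ℝ)) (hUopen : IsOpen U)
    (X Y : (Fin n → ℝ) → (Fin n → ℝ))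
    (hX : ContDiffOn ℝ 1 X U) (hY : ContDiffOn ℝ 1 Y U)
    (hcomm : ∀ x ∈ U, fderiv ℝ Y x (X x) - fderiv ℝ X x (Y x) = 0)
    (z : Fin n → ℝ) (hXz : X z = 0)
    (I : Set ℝ) (hI : I.OrdConnected) (h0I : (0 : ℝ) ∈ I)
    (γ : ℝ → (Fin n → ℝ)) (hγ0 : γ 0 = z)
    (hγU : ∀ t ∈ I, γ t ∈ U)
    (hγ : ∀ t ∈ I, HasDerivAt γ (Y (γ t)) t) :
    ∀ t ∈ I, 0 ≤ t → X (γ t) = 0 := by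
  intro t htI ht0
  -- Icc 0 t ⊆ I
  have hIcc : Icc (0 : ℝ) t ⊆ I := by
    intro s hs
    exact hI.out h0I htI (by simpa [uIcc_of_le ht0] using hs)
  -- clamp function
  set c : ℝ → ℝ := fun s => min t (max 0 s) with hc
  have hcmem : ∀ s, c s ∈ Icc (0 : ℝ) t := fun s =>
    ⟨le_min ht0 (le_max_left _ _), min_le_left _ _⟩
  have hcid : ∀ s ∈ Icc (0 : ℝ) t, c s = s := by
    intro s hs
    simp [hc, max_eq_right hs.1, min_eq_right hs.2]
  -- differentiability facts
  have hγcont : ∀ s ∈ Icc (0:ℝ) t, ContinuousAt γ s := fun s hs =>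
    (hγ s (hIcc hs)).continuousAt
  have hfY : ContinuousOn (fderiv ℝ Y) U :=
    hY.continuousOn_fderiv_of_isOpen hUopen le_rfl
  -- max of operator norm along the compact piece of the curve
  have hφ : ContinuousOn (fun s => ‖fderiv ℝ Y (γ s)‖₊) (Icc (0:ℝ) t) := by
    apply ContinuousOn.nnnorm
    apply hfY.comp (fun s hs => (hγcont s hs).continuousWithinAt)
    exact fun s hs => hγU s (hIcc hs)
  obtain ⟨s₀, hs₀, hmax⟩ := isCompact_Icc.exists_isMaxOn (nonempty_Icc.2 ht0) hφ
  set K : NNReal := ‖fderiv ℝ Y (γ s₀)‖₊ with hK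
  -- the linear ODE vector field
  set v : ℝ → (Fin n → ℝ) → (Fin n → ℝ) := fun s w => fderiv ℝ Y (γ (c s)) w with hv
  have hvlip : ∀ s, LipschitzWith K (v s) := by
    intro s
    exact (fderiv ℝ Y (γ (c s))).lipschitz.weaken (hmax (hcmem s))
  -- g = X ∘ γ solves the ODE
  have hderiv : ∀ s ∈ Icc (0:ℝ) t, HasDerivAt (fun u => X (γ u)) (v s (X (γ s))) s := by
    intro s hs
    have hsU : γ s ∈ U := hγU s (hIcc hs)
    have hXd : DifferentiableAt ℝ X (γ s) :=
      (hX.differentiableOn one_ne_zero).differentiableAt (hUopen.mem_nhds hsU)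
    have h1 : HasDerivAt (fun u => X (γ u)) (fderiv ℝ X (γ s) (Y (γ s))) s :=
      hXd.hasFDerivAt.comp_hasDerivAt s (hγ s (hIcc hs))
    have h2 : fderiv ℝ X (γ s) (Y (γ s)) = v s (X (γ s)) := by
      have := hcomm (γ s) hsU
      rw [sub_eq_zero] at this
      rw [hv]; simp only [hcid s hs]
      exact this.symm
    rwa [h2] at h1
  have hcontg : ContinuousOn (fun u => X (γ u)) (Icc (0:ℝ) t) :=
    fun s hs => ((hderiv s hs).continuousAt).continuousWithinAt
  have hzero : ∀ s, v s 0 = 0 := fun s => (fderiv ℝ Y (γ (c s))).map_zero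
  have := ODE_solution_unique (E := Fin n → ℝ) hvlip hcontg
    (fun s hs => (hderiv s (Ico_subset_Icc_self hs)).hasDerivWithinAt)
    (continuousOn_const (c := (0 : Fin n → ℝ)))
    (fun s _ => by
      rw [show v s (0 : Fin n → ℝ) = 0 from hzero s]
      exact (hasDerivWithinAt_const _ _ _))
    (by simp [hγ0, hXz])
  exact this (right_mem_Icc.2 ht0)
theorem zero_set_invariant_along_commuting_flow
    (n : ℕ) (U : Set (Fin n → ℝ)) (hUopen : IsOpen U)
    (X Y : (Fin n → ℝ) → (Fin n → ℝ))
    (hX : ContDiffOn ℝ 1 X U) (hY : ContDiffOn ℝ 1 Y U)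
    (hcomm : ∀ x ∈ U, fderiv ℝ Y x (X x) - fderiv ℝ X x (Y x) = 0)
    (z : Fin n → ℝ) (hz : z ∈ U) (hXz : X z = 0)
    (I : Set ℝ) (hI : I.OrdConnected) (h0I : (0 : ℝ) ∈ I)
    (γ : ℝ → (Fin n → ℝ)) (hγ0 : γ 0 = z)
    (hγU : ∀ t ∈ I, γ t ∈ U)
    (hγ : ∀ t ∈ I, HasDerivAt γ (Y (γ t)) t) :
    (∀ t ∈ I, X (γ t) = 0) ∧
      (Y z ≠ 0 → (0 : ℝ) ∈ closure (I \ {0}) →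
        z ∈ closure {x | X x = 0 ∧ x ≠ z}) := by
  have part1 : ∀ t ∈ I, X (γ t) = 0 := by
    intro t htI
    rcases le_or_gt 0 t with ht0 | ht0
    · exact key_zero_along_flow n U hUopen X Y hX hY hcomm z hXz I hI h0I γ hγ0 hγU hγ t htI ht0
    · -- time reversal
      set Y' : (Fin n → ℝ) → (Fin n → ℝ) := fun y => -Y y with hY'def
      have hY' : ContDiffOn ℝ 1 Y' U := hY.neg
      have hcomm' : ∀ x ∈ U, fderiv ℝ Y' x (X x) - fderiv ℝ X x (Y' x) = 0 := by
        intro x hx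
        have h1 : fderiv ℝ Y' x = -fderiv ℝ Y x := fderiv_neg
        have h2 := hcomm x hx
        rw [h1]
        simp only [hY'def, ContinuousLinearMap.neg_apply, map_neg]
        rw [neg_sub_neg, ← neg_sub]
        rw [h2, neg_zero]
      set I' : Set ℝ := Neg.neg ⁻¹' I with hI'def
      have hI' : I'.OrdConnected := by
        constructor
        intro a ha b hb x hx
        have : -x ∈ Set.Icc (-b) (-a) := ⟨neg_le_neg hx.2, neg_le_neg hx.1⟩
        exact hI.out hb ha this
      have h0I' : (0 : ℝ) ∈ I' := by simpa [hI'def] using h0I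
      set γ' : ℝ → (Fin n → ℝ) := fun s => γ (-s) with hγ'def
      have hγ'0 : γ' 0 = z := by simpa [hγ'def] using hγ0
      have hγ'U : ∀ s ∈ I', γ' s ∈ U := fun s hs => hγU (-s) hs
      have hγ' : ∀ s ∈ I', HasDerivAt γ' (Y' (γ' s)) s := by
        intro s hs
        have h1 : HasDerivAt γ (Y (γ (-s))) (-s) := hγ (-s) hs
        have h2 : HasDerivAt (fun u : ℝ => -u) (-1 : ℝ) s := by
          exact (hasDerivAt_id s).neg
        have := HasDerivAt.scomp s h1 h2
        exact this.congr_deriv (by simp [hγ'def, hY'def])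
      have := key_zero_along_flow n U hUopen X Y' hX hY' hcomm' z hXz I' hI' h0I'
        γ' hγ'0 hγ'U hγ' (-t) (by simpa [hI'def] using htI) (by linarith)
      simpa [hγ'def] using this
  refine ⟨part1, ?_⟩
  intro hYne hclo
  have h0 : HasDerivAt γ (Y z) 0 := by
    have := hγ 0 h0I; rwa [hγ0] at this
  have hlo := hasDerivAt_iff_isLittleO.mp h0
  have hhalf : (0 : ℝ) < ‖Y z‖ / 2 := by
    have : 0 < ‖Y z‖ := norm_pos_iff.mpr hYne
    linarith
  have hev : ∀ᶠ s in nhds (0 : ℝ), ‖γ s - γ 0 - (s - 0) • Y z‖ ≤ ‖Y z‖ / 2 * ‖s - 0‖ :=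
    hlo.def hhalf
  rw [Metric.mem_closure_iff]
  intro ε hε
  have hev2 : ∀ᶠ s in nhds (0 : ℝ), dist (γ s) (γ 0) < ε :=
    (h0.continuousAt.tendsto).eventually (Metric.ball_mem_nhds _ hε)
  obtain ⟨δ, hδ, hδh⟩ := Metric.eventually_nhds_iff.mp (hev.and hev2)
  obtain ⟨s, hsI, hs⟩ := Metric.mem_closure_iff.mp hclo δ hδ
  have hsd : dist s 0 < δ := by
    rw [dist_comm] at hs; simpa using hs
  obtain ⟨hle, hdist⟩ := hδh hsd
  have hsne : s ≠ 0 := hsI.2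
  have hne : γ s ≠ z := by
    intro hgs
    rw [hgs, hγ0] at hle
    have hle' : ‖s • Y z‖ ≤ ‖Y z‖ / 2 * ‖s‖ := by simpa using hle
    rw [norm_smul, Real.norm_eq_abs] at hle'
    have habs : (0 : ℝ) < |s| := abs_pos.mpr hsne
    nlinarith [norm_pos_iff.mpr hYne]
  refine ⟨γ s, ⟨part1 s hsI.1, hne⟩, ?_⟩
  rw [dist_comm]
  rwa [hγ0] at hdist
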